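/- Let u, v, c, d, w be pairwise distinct complex numbers of modulus 1 with uv ≠ cw and uv ≠ dw, and set a := (uv(c+w) − cw(u+v))/(uv − cw) and b := (uv(d+w) − dw(u+v))/(uv − dw) (the intersection points of the line through u,v with the lines through c,w and through d,w respectively). Then the absolute cross ratios agree: |u−b|·|a−v|·|u−c|·|d−v| = |u−d|·|c−v|·|u−a|·|b−v| (i.e. |u,a,b,v| = |u,c,d,v|). -/

import Mathlib

open Complex

/-- Lemma 3.12 (1): for `u, c, d, v, w` on the unit circle, pairwise distinct, with
`a = LIS[u,v,c,w]` and `b = LIS[u,v,d,w]`, the absolute cross ratios agree: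
`|u,a,b,v| = |u,c,d,v|`. -/
theorem stmt_10 (u v c d w : ℂ)
    (hu : ‖u‖ = 1) (hv : ‖v‖ = 1) (hc : ‖c‖ = 1)
    (hd : ‖d‖ = 1) (hw : ‖w‖ = 1)
    (huv : u ≠ v) (huc : u ≠ c) (hud : u ≠ d) (huw : u ≠ w)
    (hvc : v ≠ c) (hvd : v ≠ d) (hvw : v ≠ w)
    (hcd : c ≠ d) (hcw : c ≠ w) (hdw : d ≠ w)
    (h1 : u * v ≠ c * w) (h2 : u * v ≠ d * w) :
    let a : ℂ := (u * v * (c + w) - c * w * (u + v)) / (u * v - c * w)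
    let b : ℂ := (u * v * (d + w) - d * w * (u + v)) / (u * v - d * w)
    ‖u - b‖ * ‖a - v‖ * (‖u - c‖ * ‖d - v‖) =
      ‖u - d‖ * ‖c - v‖ * (‖u - a‖ * ‖b - v‖) := by
  intro a b
  have h1' : u * v - c * w ≠ 0 := sub_ne_zero.mpr h1
  have h2' : u * v - d * w ≠ 0 := sub_ne_zero.mpr h2
  have ha1 : u - a = v * (u - c) * (u - w) / (u * v - c * w) := by
    show u - _ = _
    rw [eq_div_iff h1', sub_mul, div_mul_cancel₀ _ h1']; ring
  have ha2 : a - v = -(u * (v - c) * (v - w)) / (u * v - c * w) := by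
    show _ - v = _
    rw [eq_div_iff h1', sub_mul, div_mul_cancel₀ _ h1']; ring
  have hb1 : u - b = v * (u - d) * (u - w) / (u * v - d * w) := by
    show u - _ = _
    rw [eq_div_iff h2', sub_mul, div_mul_cancel₀ _ h2']; ring
  have hb2 : b - v = -(u * (v - d) * (v - w)) / (u * v - d * w) := by
    show _ - v = _
    rw [eq_div_iff h2', sub_mul, div_mul_cancel₀ _ h2']; ring
  have sym : ∀ x y : ℂ, ‖x - y‖ = ‖y - x‖ := fun x y => by
    rw [← neg_sub, norm_neg]
  rw [ha1, ha2, hb1, hb2, sym d v, sym c v]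
  simp only [norm_div, norm_mul, norm_neg, hu, hv]
  have k1 : ‖u * v - c * w‖ ≠ 0 := norm_ne_zero_iff.mpr h1'
  have k2 : ‖u * v - d * w‖ ≠ 0 := norm_ne_zero_iff.mpr h2'
  field_simp
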